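/- If ρ^{ab} is a classical-quantum state ρ^{ab} = Σᵢ pᵢ |αᵢ⟩⟨αᵢ| ⊗ ρ^{b|i} with {|αᵢ⟩} orthonormal, then for any Hermitian operator H_b on the second factor and H_B = 1⊗H_b, the quantum Fisher information decomposes as F(ρ^{ab}, H_B) = Σᵢ pᵢ F(ρ^{b|i}, H_b). -/

import Mathlib

open Matrix BigOperators Kronecker

/-- |v⟩⟨v| as a matrix. -/
noncomputable def ketbra {d : Type*} [Fintype d] (v : d → ℂ) : Matrix d d ℂ :=
  Matrix.vecMulVec v (star v)

/-- An orthonormal family of vectors. -/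
def OrthonormalFam {ι d : Type*} [DecidableEq ι] [Fintype d] (ψ : ι → d → ℂ) : Prop :=
  ∀ i j, star (ψ i) ⬝ᵥ ψ j = if i = j then (1 : ℂ) else 0

/-- Quantum Fisher information computed from a spectral decomposition (p, ψ):
    F = Σ_{i,j : pᵢ+pⱼ>0} (pᵢ-pⱼ)²/(2(pᵢ+pⱼ)) |⟨ψᵢ|H|ψⱼ⟩|². -/
noncomputable def qfi {ι d : Type*} [Fintype ι] [Fintype d]
    (p : ι → ℝ) (ψ : ι → d → ℂ) (H : Matrix d d ℂ) : ℝ :=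
  ∑ i, ∑ j,
    if 0 < p i + p j then
      (p i - p j) ^ 2 / (2 * (p i + p j)) * Complex.normSq (star (ψ i) ⬝ᵥ H *ᵥ ψ j)
    else 0

/-- (p, ψ) is a (full) spectral decomposition of the density matrix ρ. -/
def IsSpectralDecomp {d : Type*} [Fintype d] [DecidableEq d]
    (ρ : Matrix d d ℂ) (p : d → ℝ) (ψ : d → d → ℂ) : Prop :=
  (∀ i, 0 ≤ p i) ∧ (∑ i, p i = 1) ∧ OrthonormalFam ψ ∧ ρ = ∑ i, p i • ketbra (ψ i)

lemma matel {da db : ℕ} (a a' : Fin da → ℂ) (b b' : Fin db → ℂ) (Hb : Matrix (Fin db) (Fin db) ℂ) :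
    star (fun kl : Fin da × Fin db => a kl.1 * b kl.2) ⬝ᵥ ((1 : Matrix (Fin da) (Fin da) ℂ) ⊗ₖ Hb) *ᵥ (fun kl => a' kl.1 * b' kl.2) = (star a ⬝ᵥ a') * (star b ⬝ᵥ Hb *ᵥ b') := by
  simp only [dotProduct, mulVec, Matrix.kroneckerMap_apply, Fintype.sum_prod_type,
    Matrix.one_apply, Pi.star_apply, star_mul', Finset.mul_sum, Finset.sum_mul]
  rw [Finset.sum_comm]
  apply Finset.sum_congr rfl; intro k _
  simp [Finset.mul_sum, Finset.sum_mul, ite_mul, zero_mul, mul_ite, mul_zero]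
  rw [Finset.sum_comm]; apply Finset.sum_congr rfl; intros; apply Finset.sum_congr rfl; intros; ring


/-- For a classical-quantum state ρ = Σᵢ pᵢ |αᵢ⟩⟨αᵢ| ⊗ ρ^{b|i} and H_B = 1 ⊗ H_b,
    F(ρ, H_B) = Σᵢ pᵢ F(ρ^{b|i}, H_b). -/
theorem stmt7 {da db m : ℕ}
    (p : Fin m → ℝ) (hp : ∀ i, 0 ≤ p i) (hpsum : ∑ i, p i = 1)
    (α : Fin m → Fin da → ℂ) (hα : OrthonormalFam α)
    (ρb : Fin m → Matrix (Fin db) (Fin db) ℂ)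
    (q : Fin m → Fin db → ℝ) (β : Fin m → Fin db → Fin db → ℂ)
    (hdec : ∀ i, IsSpectralDecomp (ρb i) (q i) (β i))
    (ρab : Matrix (Fin da × Fin db) (Fin da × Fin db) ℂ)
    (hρab : ρab = ∑ i, p i • (ketbra (α i) ⊗ₖ ρb i))
    (Hb : Matrix (Fin db) (Fin db) ℂ) (hHb : Hb.IsHermitian) :
    qfi (fun x : Fin m × Fin db => p x.1 * q x.1 x.2)
        (fun x : Fin m × Fin db => fun kl : Fin da × Fin db => α x.1 kl.1 * β x.1 x.2 kl.2)
        ((1 : Matrix (Fin da) (Fin da) ℂ) ⊗ₖ Hb)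
      = ∑ i, p i * qfi (q i) (β i) Hb := by
  have key : ∀ (i j : Fin m) (k l : Fin db),
      star (fun kl : Fin da × Fin db => α i kl.1 * β i k kl.2) ⬝ᵥ
        ((1 : Matrix (Fin da) (Fin da) ℂ) ⊗ₖ Hb) *ᵥ (fun kl => α j kl.1 * β j l kl.2)
      = (if i = j then (1:ℂ) else 0) * (star (β i k) ⬝ᵥ Hb *ᵥ β j l) := by
    intro i j k l; rw [matel, hα]
  simp only [qfi, Fintype.sum_prod_type, key]
  apply Finset.sum_congr rfl
  intro i _
  rw [Finset.mul_sum]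
  apply Finset.sum_congr rfl
  intro k _
  refine (Fintype.sum_eq_single i fun j hj => ?_).trans ?_
  · have hij : ¬ (i = j) := fun h => hj h.symm
    exact Finset.sum_eq_zero fun l _ => by simp [hij]
  rw [Finset.mul_sum]
  apply Finset.sum_congr rfl
  intro l _
  simp only [if_pos rfl, if_true, one_mul]
  rcases eq_or_lt_of_le (hp i) with h | h
  · rw [← h]; simp
  · rw [← mul_add]
    by_cases hql : 0 < q i k + q i l
    · rw [if_pos (mul_pos h hql), if_pos hql]
      have hne : q i k + q i l ≠ 0 := ne_of_gt hql
      field_simp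
    · rw [if_neg (fun hc => hql ((mul_pos_iff_of_pos_left h).mp hc)), if_neg hql, mul_zero]
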